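/- arXiv:1110.2806 — 2 statements merged into one kernel-verified Lean document; each statement's English description precedes it below -/
import Mathlib

section
/- Let φ_i(y) = Σ_{n ≥ i} h_{n-i}(f,...,f) y^n/n! where h_{n-i} is the complete homogeneous symmetric function in i copies of a single indeterminate f. Then for all i ≥ 0, ∂φ_{i+1}/∂y − f·φ_{i+1} = φ_i, where φ_0 = 1. -/
open PowerSeries

/-- The complete homogeneous symmetric polynomial of degree `j`
in the `k` variables `x 0, …, x (k-1)`. -/
noncomputable def completeHomog {A : Type*} [CommRing A] (x : ℕ → A) (k j : ℕ) : A :=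
  ∑ d ∈ Finset.Nat.antidiagonalTuple k j, ∏ t : Fin k, x t ^ d t

/-- `φ_i(y) = Σ_{n ≥ i} h_{n-i}(f,…,f) y^n / n!`, the specialization of the general
`φ`-series at `x_1 = ⋯ = x_i = f`. -/
noncomputable def phiF {A : Type*} [CommRing A] [Algebra ℚ A] (f : A) (i : ℕ) :
    PowerSeries A :=
  PowerSeries.mk fun n =>
    if i ≤ n then ((n.factorial : ℚ)⁻¹) • completeHomog (fun _ => f) i (n - i) else 0

lemma card_antidiagonalTuple (k j : ℕ) :
    (Finset.Nat.antidiagonalTuple k j).card = (k + j - 1).choose j := by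
  rw [← Fintype.card_coe]
  rw [Fintype.card_congr ((Equiv.subtypeEquivRight
    (fun x => Finset.Nat.mem_antidiagonalTuple)).trans
    (Sym.equivNatSumOfFintype (Fin k) j).symm)]
  rw [Sym.card_sym_eq_choose, Fintype.card_fin]

lemma completeHomog_const {A : Type*} [CommRing A] (f : A) (k j : ℕ) :
    completeHomog (fun _ => f) k j = ((k + j - 1).choose j : ℕ) • f ^ j := by
  unfold completeHomog
  rw [Finset.sum_congr rfl (fun d hd => ?_), Finset.sum_const, card_antidiagonalTuple]
  rw [Finset.prod_pow_eq_pow_sum]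
  congr 1
  exact Finset.Nat.mem_antidiagonalTuple.mp hd

lemma coeff_phiF {A : Type*} [CommRing A] [Algebra ℚ A] (f : A) (i n : ℕ) :
    PowerSeries.coeff n (phiF f i)
      = if i ≤ n then (((i + (n - i) - 1).choose (n - i) : ℚ) / n.factorial) • f ^ (n - i)
        else 0 := by
  rw [phiF, coeff_mk]
  split_ifs with h
  · rw [completeHomog_const, ← Nat.cast_smul_eq_nsmul ℚ, smul_smul, div_eq_inv_mul]
  · rfl

/-- For all `i ≥ 0`:  `∂φ_{i+1}/∂y − f·φ_{i+1} = φ_i`, where `φ_0 = 1`. -/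
theorem stmt2 {A : Type*} [CommRing A] [Algebra ℚ A] (f : A) (i : ℕ) :
    (PowerSeries.derivative A (phiF f (i + 1)) - PowerSeries.C f * phiF f (i + 1)
        = phiF f i) ∧ phiF f 0 = 1 := by
  constructor
  · ext n
    rw [map_sub, coeff_derivative, coeff_C_mul, coeff_phiF, coeff_phiF, coeff_phiF]
    rcases lt_or_ge n i with h | h
    · rw [if_neg (by omega), if_neg (by omega), if_neg (by omega)]
      simp
    · obtain ⟨m, rfl⟩ := Nat.exists_eq_add_of_le h
      rw [if_pos (show i + 1 ≤ i + m + 1 by omega), if_pos (show i ≤ i + m from h)]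
      have e1 : i + m + 1 - (i + 1) = m := by omega
      have e2 : i + m - i = m := by omega
      have e3 : i + 1 + m - 1 = i + m := by omega
      rw [e1, e2, e3]
      have hfact : ((i + m).factorial : ℚ) ≠ 0 := Nat.cast_ne_zero.mpr (i + m).factorial_ne_zero
      cases m with
      | zero =>
        rw [if_neg (by omega), mul_zero, sub_zero]
        rw [← Nat.cast_add_one, mul_comm, ← nsmul_eq_mul, ← Nat.cast_smul_eq_nsmul ℚ, smul_smul]
        congr 1
        rw [Nat.choose_zero_right, Nat.choose_zero_right, Nat.factorial_succ]
        push_cast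
        field_simp
        simp
      | succ m' =>
        rw [if_pos (by omega)]
        have e4 : i + (m' + 1) - (i + 1) = m' := by omega
        have e6 : i + 1 + m' - 1 = i + m' := by omega
        rw [e4, e6]
        rw [← Nat.cast_add_one, mul_comm _ ((i + (m' + 1) + 1 : ℕ) : A), ← nsmul_eq_mul,
          ← Nat.cast_smul_eq_nsmul ℚ, smul_smul, mul_smul_comm,
          show f * f ^ m' = f ^ (m' + 1) by rw [pow_succ, mul_comm]]
        rw [← sub_smul]
        congr 1
        have hpascal : (i + (m' + 1)).choose (m' + 1)
            = (i + m').choose m' + (i + m').choose (m' + 1) := by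
          rw [show i + (m' + 1) = (i + m') + 1 from rfl]
          exact Nat.choose_succ_succ (i + m') m'
        rw [hpascal, show i + (m' + 1) - 1 = i + m' by omega]
        have hfs : ((i + (m' + 1) + 1).factorial : ℚ)
            = (i + (m' + 1) + 1) * (i + (m' + 1)).factorial := by
          rw [Nat.factorial_succ]; push_cast; ring
        have hfact2 : ((i + (m' + 1)).factorial : ℚ) ≠ 0 :=
          Nat.cast_ne_zero.mpr (i + (m' + 1)).factorial_ne_zero
        rw [hfs]
        push_cast
        field_simp
        ring
  · ext n
    rw [coeff_phiF]
    simp only [Nat.zero_le, if_true, Nat.sub_zero, Nat.zero_add]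
    rcases Nat.eq_zero_or_pos n with rfl | hn
    · simp [coeff_one]
    · rw [coeff_one, if_neg (by omega), Nat.choose_eq_zero_of_lt (by omega)]
      simp
end

section
/- For any integers a ≥ 0, b ≥ 1, c ≥ 2, d ≥ 0, the quantity Σ over the torus contributions gives: the coefficient [x^{a+1}/(a+1)! · y^b/b! · v^{c+d}/(c+d)! · w^d] of (a+1)(1−δ_{b,0})(⟨φ_{1,0}⟩ + 2w⟨φ_{0,1}⟩ + 2w⟨φ_{1,1}⟩ + w^2⟨φ_{0,2}⟩ + w^2⟨φ_{1,2}⟩) + (a+1)(1−δ_{b,0})(b−1)(2w⟨φ_{0,1}⟩ + w^2⟨φ_{0,2}⟩) equals (a+1)(d+1), where [v^n/n!]⟨φ_{i,j}⟩ = [t^{n−i−j}](1−t)^{-i}(1−wt)^{-j}. -/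
open PowerSeries

/-- `⟨φ_{i,j}⟩(v)`: the formal power series in `v` over `ℚ[w]` with
`[v^n/n!]⟨φ_{i,j}⟩ = [t^{n−i−j}] (1−t)^{-i} (1−wt)^{-j}
  = Σ_{p+q = n−i−j} C(p+i−1,p) C(q+j−1,q) w^q`. -/
noncomputable def phiIJ (i j : ℕ) : PowerSeries (Polynomial ℚ) :=
  PowerSeries.mk fun n =>
    if i + j ≤ n then
      ((n.factorial : ℚ)⁻¹) •
        ∑ pq ∈ Finset.HasAntidiagonal.antidiagonal (n - i - j),
          (((pq.1 + i - 1).choose pq.1 * (pq.2 + j - 1).choose pq.2 : ℕ) : ℚ) •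
            (Polynomial.X : Polynomial ℚ) ^ pq.2
    else 0

/-- The indeterminate `w`, viewed as a constant power series. -/
noncomputable def W : PowerSeries (Polynomial ℚ) :=
  PowerSeries.C (R := Polynomial ℚ) Polynomial.X

lemma coeff_sum_smul_X_pow (m d : ℕ) (g : ℕ × ℕ → ℚ) :
    Polynomial.coeff (∑ pq ∈ Finset.HasAntidiagonal.antidiagonal m,
        g pq • (Polynomial.X : Polynomial ℚ) ^ pq.2) d
      = if d ≤ m then g (m - d, d) else 0 := by
  rw [Polynomial.finset_sum_coeff]
  simp only [Polynomial.coeff_smul, Polynomial.coeff_X_pow, smul_eq_mul, mul_ite, mul_one,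
    mul_zero]
  by_cases hd : d ≤ m
  · rw [if_pos hd]
    rw [Finset.sum_eq_single_of_mem (m - d, d)]
    · rw [if_pos rfl]
    · rw [Finset.HasAntidiagonal.mem_antidiagonal]; omega
    · rintro ⟨p, q⟩ hpq hne
      rw [Finset.HasAntidiagonal.mem_antidiagonal] at hpq
      rw [if_neg]
      rintro rfl
      exact hne (by ext <;> simp <;> omega)
  · rw [if_neg hd, Finset.sum_eq_zero]
    rintro ⟨p, q⟩ hpq
    rw [Finset.HasAntidiagonal.mem_antidiagonal] at hpq
    rw [if_neg]; omega

lemma key (i j n d : ℕ) :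
    Polynomial.coeff ((PowerSeries.coeff (R := Polynomial ℚ) n) (phiIJ i j)) d
      = if i + j ≤ n ∧ d ≤ n - i - j then
          ((n.factorial : ℚ))⁻¹ *
            (((n - i - j - d + i - 1).choose (n - i - j - d) * (d + j - 1).choose d : ℕ) : ℚ)
        else 0 := by
  rw [phiIJ, PowerSeries.coeff_mk]
  by_cases h : i + j ≤ n
  · rw [if_pos h, Polynomial.coeff_smul, smul_eq_mul,
      coeff_sum_smul_X_pow (n - i - j) d (fun pq => (((pq.1 + i - 1).choose pq.1 *
        (pq.2 + j - 1).choose pq.2 : ℕ) : ℚ))]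
    by_cases hd : d ≤ n - i - j
    · rw [if_pos hd, if_pos ⟨h, hd⟩]
    · rw [if_neg hd, if_neg (by tauto), mul_zero]
  · rw [if_neg h, if_neg (by tauto), Polynomial.coeff_zero]

lemma coeff_X_mul' (p : Polynomial ℚ) (d : ℕ) :
    (Polynomial.X * p).coeff d = if 1 ≤ d then p.coeff (d - 1) else 0 := by
  cases d with
  | zero => simp [Polynomial.mul_coeff_zero]
  | succ k => simp [Polynomial.coeff_X_mul]

lemma coeff_X2_mul (p : Polynomial ℚ) (d : ℕ) :
    (Polynomial.X ^ 2 * p).coeff d = if 2 ≤ d then p.coeff (d - 2) else 0 := by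
  match d with
  | 0 => simp [Polynomial.mul_coeff_zero]
  | 1 =>
    rw [pow_two, mul_assoc, Polynomial.coeff_X_mul, Polynomial.mul_coeff_zero]
    simp
  | (k + 2) =>
    rw [Polynomial.coeff_X_pow_mul p 2 k]
    simp

/-- For `a ≥ 0`, `b ≥ 1`, `c ≥ 2`, `d ≥ 0`, the coefficient `[v^{c+d}/(c+d)! · w^d]` of
`(a+1)(1−δ_{b,0})(⟨φ_{1,0}⟩ + 2w⟨φ_{0,1}⟩ + 2w⟨φ_{1,1}⟩ + w²⟨φ_{0,2}⟩ + w²⟨φ_{1,2}⟩)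
 + (a+1)(1−δ_{b,0})(b−1)(2w⟨φ_{0,1}⟩ + w²⟨φ_{0,2}⟩)`
equals `(a+1)(d+1)` — the number of `(a,b,c,d)`-dipoles on the torus with
`b ≥ 1`, `c ≥ 2`. -/
theorem stmt16 (a b c d : ℕ) (hb : 1 ≤ b) (hc : 2 ≤ c) :
    Polynomial.coeff
      (((c + d).factorial : ℚ) •
        PowerSeries.coeff (R := Polynomial ℚ) (c + d)
          ((((a : ℚ) + 1) * (1 - if b = 0 then 1 else 0)) •
              (phiIJ 1 0 + 2 • (W * phiIJ 0 1) + 2 • (W * phiIJ 1 1)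
                + W ^ 2 * phiIJ 0 2 + W ^ 2 * phiIJ 1 2)
            + (((a : ℚ) + 1) * (1 - if b = 0 then 1 else 0) * ((b : ℚ) - 1)) •
                (2 • (W * phiIJ 0 1) + W ^ 2 * phiIJ 0 2))) d
      = ((a : ℚ) + 1) * ((d : ℚ) + 1) := by
  have hb0 : ¬ b = 0 := by omega
  have hW2 : W ^ 2 = PowerSeries.C (R := Polynomial ℚ) (Polynomial.X ^ 2) := by
    rw [W, map_pow]
  simp only [hb0, if_false, sub_zero, mul_one, hW2]
  simp only [W, map_add, map_nsmul, PowerSeries.coeff_smul, PowerSeries.coeff_C_mul]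
  set n := c + d with hn
  have hdn : d + 2 ≤ n := by omega
  have hA : Polynomial.coeff ((PowerSeries.coeff (R := Polynomial ℚ) n) (phiIJ 1 0)) d
      = (n.factorial : ℚ)⁻¹ * (if d = 0 then 1 else 0) := by
    rw [key, if_pos ⟨by omega, by omega⟩]
    cases d with
    | zero => simp [Nat.choose_self]
    | succ k =>
      rw [Nat.choose_eq_zero_of_lt (show k + 1 + 0 - 1 < k + 1 by omega)]
      simp
  have hB : (Polynomial.X * (PowerSeries.coeff (R := Polynomial ℚ) n) (phiIJ 0 1)).coeff d = 0 := by
    rw [coeff_X_mul']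
    by_cases h1 : 1 ≤ d
    · rw [if_pos h1, key, if_pos ⟨by omega, by omega⟩]
      have hcc : n - 0 - 1 - (d - 1) = c := by omega
      rw [hcc, Nat.choose_eq_zero_of_lt (show c + 0 - 1 < c by omega)]
      simp
    · rw [if_neg h1]
  have hC : (Polynomial.X * (PowerSeries.coeff (R := Polynomial ℚ) n) (phiIJ 1 1)).coeff d
      = (n.factorial : ℚ)⁻¹ * (if 1 ≤ d then 1 else 0) := by
    rw [coeff_X_mul']
    by_cases h1 : 1 ≤ d
    · rw [if_pos h1, key, if_pos ⟨by omega, by omega⟩, if_pos h1]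
      rw [show n - 1 - 1 - (d - 1) + 1 - 1 = n - 1 - 1 - (d - 1) from by omega,
        Nat.choose_self, show d - 1 + 1 - 1 = d - 1 from by omega, Nat.choose_self]
      simp
    · rw [if_neg h1, if_neg h1, mul_zero]
  have hD : (Polynomial.X ^ 2 * (PowerSeries.coeff (R := Polynomial ℚ) n) (phiIJ 0 2)).coeff d
      = 0 := by
    rw [coeff_X2_mul]
    by_cases h2 : 2 ≤ d
    · rw [if_pos h2, key, if_pos ⟨by omega, by omega⟩]
      have hcc : n - 0 - 2 - (d - 2) = c := by omega
      rw [hcc, Nat.choose_eq_zero_of_lt (show c + 0 - 1 < c by omega)]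
      simp
    · rw [if_neg h2]
  have hE : (Polynomial.X ^ 2 * (PowerSeries.coeff (R := Polynomial ℚ) n) (phiIJ 1 2)).coeff d
      = (n.factorial : ℚ)⁻¹ * (if 2 ≤ d then (d : ℚ) - 1 else 0) := by
    rw [coeff_X2_mul]
    by_cases h2 : 2 ≤ d
    · rw [if_pos h2, key, if_pos ⟨by omega, by omega⟩, if_pos h2]
      rw [show n - 1 - 2 - (d - 2) + 1 - 1 = n - 1 - 2 - (d - 2) from by omega,
        Nat.choose_self, show d - 2 + 2 - 1 = (d - 2) + 1 from by omega,
        Nat.choose_succ_self_right]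
      have : ((d - 2 + 1 : ℕ) : ℚ) = (d : ℚ) - 1 := by
        have : d - 2 + 1 = d - 1 := by omega
        rw [this, Nat.cast_sub (by omega)]
        norm_num
      rw [one_mul, this]
    · rw [if_neg h2, if_neg h2, mul_zero]
  simp only [smul_add, Polynomial.coeff_smul, Polynomial.coeff_add, hA, hB, hC, hD, hE]
  simp only [smul_eq_mul, nsmul_eq_mul, mul_zero, smul_zero, add_zero, zero_add,
    Nat.cast_ofNat]
  have hf : (n.factorial : ℚ) ≠ 0 := Nat.cast_ne_zero.mpr n.factorial_ne_zero
  by_cases h0 : d = 0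
  · subst h0
    norm_num
    field_simp
  · by_cases h1 : d = 1
    · subst h1
      norm_num
      field_simp
    · rw [if_neg h0, if_pos (by omega), if_pos (by omega)]
      field_simp
      ring
end
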